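/- Let n ≥ 1. For every α > 0 there exist γ ∈ (0,1) (sufficiently close to 1) and a constant C = C(n, α, γ) > 0 such that for every closed set F ⊆ ℝⁿ whose complement has finite Lebesgue measure and every measurable function Φ : ℝⁿ × (0,∞) → [0,∞], one has ∫∫_{𝓡^α(F*)} Φ(x,t) tⁿ dx dt ≤ C ∫_F ( ∫∫_{Γ(x)} Φ(y,t) dy dt ) dx, where F* denotes the set of points of global γ-density with respect to F. -/

import Mathlib

open MeasureTheory Set
open scoped ENNReal

noncomputable section

/-- The cone of aperture `α` with vertex `x`:
`Γ^α(x) = {(y,t) ∈ ℝⁿ × (0,∞) : |x − y| < α t}`. -/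
def cone (n : ℕ) (α : ℝ) (x : EuclideanSpace ℝ (Fin n)) :
    Set (EuclideanSpace ℝ (Fin n) × ℝ) :=
  {p | 0 < p.2 ∧ dist x p.1 < α * p.2}

/-- The saw-tooth region `𝓡^α(F) = ⋃_{x ∈ F} Γ^α(x)`. -/
def sawtooth (n : ℕ) (α : ℝ) (F : Set (EuclideanSpace ℝ (Fin n))) :
    Set (EuclideanSpace ℝ (Fin n) × ℝ) :=
  ⋃ x ∈ F, cone n α x

/-- The set `F*` of points of global `γ`-density with respect to `F`:
`{x : for every ball B centered at x, |F ∩ B| / |B| ≥ γ}`. -/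
def densityPoints (n : ℕ) (γ : ℝ) (F : Set (EuclideanSpace ℝ (Fin n))) :
    Set (EuclideanSpace ℝ (Fin n)) :=
  {x | ∀ r : ℝ, 0 < r →
    ENNReal.ofReal γ * volume (Metric.ball x r) ≤ volume (F ∩ Metric.ball x r)}

lemma cone_isOpen (n : ℕ) (β : ℝ) (x : EuclideanSpace ℝ (Fin n)) :
    IsOpen (cone n β x) := by
  have : cone n β x = {p : EuclideanSpace ℝ (Fin n) × ℝ | 0 < p.2} ∩
      {p | dist x p.1 < β * p.2} := rfl
  rw [this]
  exact (isOpen_lt continuous_const continuous_snd).inter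
    (isOpen_lt ((continuous_const.dist continuous_fst)) (continuous_const.mul continuous_snd))

/-- For every `α > 0` there exist `γ ∈ (0,1)` and `C = C(n,α,γ) > 0` such that for every
closed set `F ⊆ ℝⁿ` whose complement has finite measure and every nonnegative measurable `Φ`,
`∫∫_{𝓡^α(F*)} Φ(x,t) tⁿ dx dt ≤ C ∫_F (∫∫_{Γ(x)} Φ(y,t) dy dt) dx`. -/
theorem stmt0 (n : ℕ) (hn : 1 ≤ n) (α : ℝ) (hα : 0 < α) :
    ∃ γ ∈ Set.Ioo (0 : ℝ) 1, ∃ C : ℝ, 0 < C ∧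
      ∀ F : Set (EuclideanSpace ℝ (Fin n)), IsClosed F → volume Fᶜ < ⊤ →
        ∀ Φ : EuclideanSpace ℝ (Fin n) × ℝ → ℝ≥0∞, Measurable Φ →
          ∫⁻ p in sawtooth n α (densityPoints n γ F), Φ p * ENNReal.ofReal (p.2 ^ n) ≤
            ENNReal.ofReal C * ∫⁻ x in F, ∫⁻ p in cone n 1 x, Φ p := by

  set E := EuclideanSpace ℝ (Fin n) with hE
  haveI : NeZero n := ⟨by omega⟩
  haveI : Nontrivial E := inferInstance
  set ω : ℝ≥0∞ := volume (Metric.ball (0 : E) 1) with hωdef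
  have hω0 : ω ≠ 0 := (Metric.measure_ball_pos volume 0 one_pos).ne'
  have hωt : ω ≠ ⊤ := measure_ball_lt_top.ne
  have hωR : (0:ℝ) < ω.toReal := ENNReal.toReal_pos hω0 hωt
  have hK1 : (1:ℝ) ≤ (1+α)^n := one_le_pow₀ (by linarith)
  have hKpos : (0:ℝ) < (1+α)^n := by positivity
  set γ : ℝ := 1 - 1/(2*(1+α)^n) with hγdef
  have hγ0 : 0 < γ := by
    have h2K : (2:ℝ) ≤ 2*(1+α)^n := by nlinarith
    have hhalf : 1/(2*(1+α)^n) ≤ 1/2 := one_div_le_one_div_of_le (by norm_num) h2K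
    simp only [hγdef]; linarith
  have hγ1 : γ < 1 := by
    have hx : 0 < 1/(2*(1+α)^n) := by positivity
    simp only [hγdef]; linarith
  refine ⟨γ, ⟨hγ0, hγ1⟩, 2 / ω.toReal, by positivity, ?_⟩
  intro F hF hFc Φ hΦ
  -- measurability facts
  have hball : ∀ p : E × ℝ, MeasurableSet {x : E | 0 < p.2 ∧ dist x p.1 < p.2} := by
    intro p
    by_cases h : 0 < p.2
    · have : {x : E | 0 < p.2 ∧ dist x p.1 < p.2} = Metric.ball p.1 p.2 := by
        ext x; simp [Metric.mem_ball, h]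
      rw [this]; exact measurableSet_ball
    · have : {x : E | 0 < p.2 ∧ dist x p.1 < p.2} = ∅ := by
        ext x; simp [h]
      rw [this]; exact MeasurableSet.empty
  -- the key geometric estimate
  have hgeo : ∀ p ∈ sawtooth n α (densityPoints n γ F),
      ENNReal.ofReal (p.2 ^ n) ≤
        ENNReal.ofReal (2 / ω.toReal) * volume ({x : E | 0 < p.2 ∧ dist x p.1 < p.2} ∩ F) := by
    rintro ⟨y, t⟩ hp
    simp only [sawtooth, mem_iUnion] at hp
    obtain ⟨z, hz, ht, hdist⟩ := hp
    simp only at ht hdist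
    set R : ℝ := (1+α) * t with hRdef
    have ht0 : (0:ℝ) ≤ t := ht.le
    have hR : 0 < R := by positivity
    have hsub : Metric.ball y t ⊆ Metric.ball z R := by
      intro w hw
      rw [Metric.mem_ball] at hw ⊢
      calc dist w z ≤ dist w y + dist y z := dist_triangle _ _ _
        _ < t + α * t := by rw [dist_comm y z]; exact add_lt_add hw hdist
        _ = R := by ring
    set X : ℝ≥0∞ := volume (F ∩ Metric.ball y t) with hXdef
    have hdens := hz R hR
    have hcover : F ∩ Metric.ball z R ⊆ (F ∩ Metric.ball y t) ∪ (Metric.ball z R \ Metric.ball y t) := by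
      rintro w ⟨hwF, hwB⟩
      by_cases h : w ∈ Metric.ball y t
      · exact Or.inl ⟨hwF, h⟩
      · exact Or.inr ⟨hwB, h⟩
    have hvt : volume (Metric.ball y t) = ENNReal.ofReal (t ^ n) * ω := by
      rw [Measure.addHaar_ball volume y ht0, finrank_euclideanSpace_fin]
    have hvR : volume (Metric.ball z R) = ENNReal.ofReal (R ^ n) * ω := by
      rw [Measure.addHaar_ball volume z hR.le, finrank_euclideanSpace_fin]
    have hdiff : volume (Metric.ball z R \ Metric.ball y t)
        = volume (Metric.ball z R) - volume (Metric.ball y t) :=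
      measure_diff hsub measurableSet_ball.nullMeasurableSet measure_ball_lt_top.ne
    have h1 : ENNReal.ofReal γ * volume (Metric.ball z R) ≤
        X + (volume (Metric.ball z R) - volume (Metric.ball y t)) := by
      calc ENNReal.ofReal γ * volume (Metric.ball z R) ≤ volume (F ∩ Metric.ball z R) := hdens
        _ ≤ volume ((F ∩ Metric.ball y t) ∪ (Metric.ball z R \ Metric.ball y t)) :=
          measure_mono hcover
        _ ≤ X + volume (Metric.ball z R \ Metric.ball y t) := measure_union_le _ _
        _ = X + (volume (Metric.ball z R) - volume (Metric.ball y t)) := by rw [hdiff]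
    have h2 : ENNReal.ofReal γ * volume (Metric.ball z R) + volume (Metric.ball y t) ≤
        X + volume (Metric.ball z R) := by
      calc ENNReal.ofReal γ * volume (Metric.ball z R) + volume (Metric.ball y t)
          ≤ (X + (volume (Metric.ball z R) - volume (Metric.ball y t))) + volume (Metric.ball y t) :=
            add_le_add_left h1 _
        _ = X + ((volume (Metric.ball z R) - volume (Metric.ball y t)) + volume (Metric.ball y t)) := by
            rw [add_assoc]
        _ = X + volume (Metric.ball z R) := by
            rw [tsub_add_cancel_of_le (measure_mono hsub)]
    -- coefficient identity: γ R^n + t^n = R^n + t^n/2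
    have hcoeff : ENNReal.ofReal γ * ENNReal.ofReal (R ^ n) + ENNReal.ofReal (t ^ n)
        = ENNReal.ofReal (R ^ n) + ENNReal.ofReal (t ^ n / 2) := by
      rw [← ENNReal.ofReal_mul hγ0.le, ← ENNReal.ofReal_add (by positivity) (by positivity),
        ← ENNReal.ofReal_add (by positivity) (by positivity)]
      congr 1
      have : R ^ n = (1+α)^n * t^n := by rw [hRdef, mul_pow]
      rw [this, hγdef]
      field_simp
      ring
    have h3 : (ENNReal.ofReal (R ^ n) + ENNReal.ofReal (t ^ n / 2)) * ω ≤
        X + ENNReal.ofReal (R ^ n) * ω := by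
      calc (ENNReal.ofReal (R ^ n) + ENNReal.ofReal (t ^ n / 2)) * ω
          = (ENNReal.ofReal γ * ENNReal.ofReal (R ^ n) + ENNReal.ofReal (t ^ n)) * ω := by
            rw [hcoeff]
        _ = ENNReal.ofReal γ * volume (Metric.ball z R) + volume (Metric.ball y t) := by
            rw [hvt, hvR]; ring
        _ ≤ X + volume (Metric.ball z R) := h2
        _ = X + ENNReal.ofReal (R ^ n) * ω := by rw [hvR]
    have h4 : ENNReal.ofReal (t ^ n / 2) * ω ≤ X := by
      have hfin : ENNReal.ofReal (R ^ n) * ω ≠ ⊤ := ENNReal.mul_ne_top ENNReal.ofReal_ne_top hωt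
      have := h3
      rw [add_mul] at this
      rw [add_comm (ENNReal.ofReal (R^n) * ω) (ENNReal.ofReal (t^n/2) * ω)] at this
      exact ENNReal.le_of_add_le_add_right hfin this
    -- conclude
    have hset : {x : E | 0 < t ∧ dist x y < t} ∩ F = F ∩ Metric.ball y t := by
      ext x
      simp only [mem_inter_iff, mem_setOf_eq, Metric.mem_ball, and_comm]
      tauto
    simp only [hset]
    rw [ENNReal.ofReal_div_of_pos hωR, ENNReal.ofReal_toReal hωt]
    have h5 : ENNReal.ofReal (t ^ n) * ω ≤ 2 * X := by
      have he : ENNReal.ofReal (t ^ n) = 2 * ENNReal.ofReal (t ^ n / 2) := by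
        rw [show (2:ℝ≥0∞) = ENNReal.ofReal 2 by simp, ← ENNReal.ofReal_mul (by norm_num)]
        congr 1; ring
      calc ENNReal.ofReal (t ^ n) * ω = 2 * (ENNReal.ofReal (t ^ n / 2) * ω) := by
            rw [he]; ring
        _ ≤ 2 * X := by exact mul_le_mul_right h4 2
    have : ENNReal.ofReal 2 / ω * X = 2 * X / ω := by
      rw [div_eq_mul_inv, div_eq_mul_inv, mul_right_comm]
      simp
    rw [this, ENNReal.le_div_iff_mul_le (Or.inl hω0) (Or.inl hωt)]
    exact h5
  -- Tonelli: compute the right-hand side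
  have hT : MeasurableSet {q : E × (E × ℝ) | 0 < q.2.2 ∧ dist q.1 q.2.1 < 1 * q.2.2} := by
    have ho : IsOpen {q : E × (E × ℝ) | 0 < q.2.2 ∧ dist q.1 q.2.1 < 1 * q.2.2} := by
      have heq : {q : E × (E × ℝ) | 0 < q.2.2 ∧ dist q.1 q.2.1 < 1 * q.2.2}
          = {q : E × (E × ℝ) | 0 < q.2.2} ∩ {q | dist q.1 q.2.1 < 1 * q.2.2} := rfl
      rw [heq]
      exact (isOpen_lt continuous_const (continuous_snd.comp continuous_snd)).inter
        (isOpen_lt (continuous_fst.dist (continuous_fst.comp continuous_snd))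
          (continuous_const.mul (continuous_snd.comp continuous_snd)))
    exact ho.measurableSet
  have hconem : ∀ x : E, MeasurableSet (cone n 1 x) := fun x => (cone_isOpen n 1 x).measurableSet
  have key : ∫⁻ x in F, ∫⁻ p in cone n 1 x, Φ p
      = ∫⁻ p : E × ℝ, Φ p * volume ({x : E | 0 < p.2 ∧ dist x p.1 < p.2} ∩ F) := by
    have hswap : ∫⁻ x in F, ∫⁻ p : E × ℝ, (cone n 1 x).indicator Φ p
        = ∫⁻ p : E × ℝ, ∫⁻ x in F, (cone n 1 x).indicator Φ p := by
      apply lintegral_lintegral_swap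
      have hm : Measurable fun q : E × (E × ℝ) =>
          ({q : E × (E × ℝ) | 0 < q.2.2 ∧ dist q.1 q.2.1 < 1 * q.2.2}).indicator
            (fun q => Φ q.2) q :=
        (hΦ.comp measurable_snd).indicator hT
      exact hm.aemeasurable
    calc ∫⁻ x in F, ∫⁻ p in cone n 1 x, Φ p
        = ∫⁻ x in F, ∫⁻ p : E × ℝ, (cone n 1 x).indicator Φ p := by
          refine lintegral_congr fun x => ?_
          rw [lintegral_indicator (hconem x)]
      _ = ∫⁻ p : E × ℝ, ∫⁻ x in F, (cone n 1 x).indicator Φ p := hswap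
      _ = ∫⁻ p : E × ℝ, Φ p * volume ({x : E | 0 < p.2 ∧ dist x p.1 < p.2} ∩ F) := by
          refine lintegral_congr fun p => ?_
          have hfun : (fun x : E => (cone n 1 x).indicator Φ p)
              = ({x : E | 0 < p.2 ∧ dist x p.1 < p.2}).indicator (fun _ => Φ p) := by
            ext x
            simp only [Set.indicator, cone, mem_setOf_eq, one_mul]
          rw [hfun, lintegral_indicator_const (hball p), Measure.restrict_apply (hball p)]
  -- assemble
  have hsaw : MeasurableSet (sawtooth n α (densityPoints n γ F)) :=
    (isOpen_biUnion fun x _ => cone_isOpen n α x).measurableSet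
  calc ∫⁻ p in sawtooth n α (densityPoints n γ F), Φ p * ENNReal.ofReal (p.2 ^ n)
      ≤ ∫⁻ p in sawtooth n α (densityPoints n γ F),
          ENNReal.ofReal (2 / ω.toReal) *
            (Φ p * volume ({x : E | 0 < p.2 ∧ dist x p.1 < p.2} ∩ F)) := by
        refine setLIntegral_mono' hsaw fun p hp => ?_
        calc Φ p * ENNReal.ofReal (p.2 ^ n)
            ≤ Φ p * (ENNReal.ofReal (2 / ω.toReal) *
                volume ({x : E | 0 < p.2 ∧ dist x p.1 < p.2} ∩ F)) :=
              mul_le_mul_right (hgeo p hp) _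
          _ = ENNReal.ofReal (2 / ω.toReal) *
                (Φ p * volume ({x : E | 0 < p.2 ∧ dist x p.1 < p.2} ∩ F)) := by ring
    _ ≤ ∫⁻ p : E × ℝ, ENNReal.ofReal (2 / ω.toReal) *
          (Φ p * volume ({x : E | 0 < p.2 ∧ dist x p.1 < p.2} ∩ F)) :=
        setLIntegral_le_lintegral _ _
    _ = ENNReal.ofReal (2 / ω.toReal) *
          ∫⁻ p : E × ℝ, Φ p * volume ({x : E | 0 < p.2 ∧ dist x p.1 < p.2} ∩ F) :=
        lintegral_const_mul' _ _ ENNReal.ofReal_ne_top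
    _ = ENNReal.ofReal (2 / ω.toReal) * ∫⁻ x in F, ∫⁻ p in cone n 1 x, Φ p := by rw [key]
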